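/- Gelfand–Levitan equation: let b : ℕ → ℝ be a potential, T ≥ 2, and let W̄ be the T×T matrix defined by W̄_{n,m} := u^{e_{T−m}}_{n,T} (1 ≤ n, m ≤ T), where e_j is the control with (e_j)_t = 1 if t = j and 0 otherwise; W̄ is upper triangular with unit diagonal and hence invertible. Let C̄ be the T×T matrix with entries C̄_{ij} := C^T_{T+1−j, T+1−i}, where C^T is the connecting matrix of b. Then for every β = 1,…,T−1: (W̄^{−1})_{β,T} + Σ_{j=1}^{T−1} (C̄ − I)_{β,j} (W̄^{−1})_{j,T} + (C̄ − I)_{β,T} = 0. -/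

import Mathlib

/-- `sol b f t n` is the solution `u^f_{n,t}` of the discrete Schrödinger dynamical system
with potential `b` and boundary control `f`:
`u_{n,t+1} + u_{n,t-1} - u_{n+1,t} - u_{n-1,t} + b_n u_{n,t} = 0` for `n ≥ 1`, `t ≥ 0`,
`u_{n,-1} = u_{n,0} = 0` for `n ≥ 1`, and `u_{0,t} = f_t` for `t ≥ 0`
(the first argument is the time `t`, the second the space variable `n`). -/
noncomputable def sol (b f : ℕ → ℝ) : ℕ → ℕ → ℝ
  | 0, n => if n = 0 then f 0 else 0
  | 1, n => if n = 0 then f 1 else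
      sol b f 0 (n + 1) + sol b f 0 (n - 1) - b n * sol b f 0 n
  | (t + 2), n => if n = 0 then f (t + 2) else
      sol b f (t + 1) (n + 1) + sol b f (t + 1) (n - 1) - b n * sol b f (t + 1) n - sol b f t n

/-- The delta control: `δ_0 = 1`, `δ_t = 0` for `t ≥ 1`. -/
noncomputable def delta : ℕ → ℝ := fun t => if t = 0 then 1 else 0

/-- The response vector of the potential `b`: `r_s = u^δ_{1,s+1}`. -/
noncomputable def resp (b : ℕ → ℝ) (s : ℕ) : ℝ := sol b delta (s + 1) 1

/-- The entries of the connecting matrix: `Cmat r T i j = Σ_{k=0}^{T - max i j} r_{|i-j| + 2k}`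
(`i`, `j` are 1-based indices). -/
noncomputable def Cmat (r : ℕ → ℝ) (T i j : ℕ) : ℝ :=
  ∑ k ∈ Finset.range (T - max i j + 1), r (max i j - min i j + 2 * k)

/-- The control which is `1` at time `j` and `0` otherwise. -/
noncomputable def econtrol (j : ℕ) : ℕ → ℝ := fun t => if t = j then 1 else 0

/-- `Wbar b T` is the matrix `W̄_{n,m} = u^{e_{T-m}}_{n,T}` (`n`, `m` are 1-based). -/
noncomputable def Wbar (b : ℕ → ℝ) (T : ℕ) : Matrix (Fin T) (Fin T) ℝ :=
  Matrix.of fun n m => sol b (econtrol (T - ((m : ℕ) + 1))) T ((n : ℕ) + 1)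

/-- `CbarM b T` is the rotated connecting matrix `C̄_{ij} = C^T_{T+1-j, T+1-i}`. -/
noncomputable def CbarM (b : ℕ → ℝ) (T : ℕ) : Matrix (Fin T) (Fin T) ℝ :=
  Matrix.of fun i j => Cmat (resp b) T (T + 1 - ((j : ℕ) + 1)) (T + 1 - ((i : ℕ) + 1))

lemma sol_zero (b f : ℕ → ℝ) : ∀ t n, t < n → sol b f t n = 0 := by
  intro t
  induction t using Nat.twoStepInduction with
  | zero =>
      intro n hn
      simp [sol]
      omega
  | one =>
      intro n hn
      simp only [sol]
      rw [if_neg (by omega), if_neg (by omega), if_neg (by omega), if_neg (by omega)]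
      ring
  | more t ih1 ih2 =>
      intro n hn
      simp only [sol]
      rw [if_neg (by omega), ih2 (n+1) (by omega), ih2 (n-1) (by omega),
        ih2 n (by omega), ih1 n (by omega)]
      ring

lemma sol_space_zero (b f : ℕ → ℝ) (t : ℕ) : sol b f t 0 = f t := by
  match t with
  | 0 => simp [sol]
  | 1 => simp [sol]
  | (t+2) => simp [sol]

lemma sol_rec (b f : ℕ → ℝ) (t n : ℕ) (hn : n ≠ 0) :
    sol b f (t+2) n = sol b f (t+1) (n+1) + sol b f (t+1) (n-1)
      - b n * sol b f (t+1) n - sol b f t n := by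
  conv_lhs => rw [sol]
  rw [if_neg hn]

lemma sol_one (b f : ℕ → ℝ) (n : ℕ) (hn : n ≠ 0) :
    sol b f 1 n = sol b f 0 (n+1) + sol b f 0 (n-1) - b n * sol b f 0 n := by
  conv_lhs => rw [sol]
  rw [if_neg hn]

lemma u_one (b : ℕ → ℝ) (n : ℕ) : sol b delta 1 n = if n = 1 then 1 else 0 := by
  rcases Nat.eq_zero_or_pos n with h | h
  · subst h; simp [sol, delta]
  rw [sol_one b delta n (by omega)]
  simp only [sol]
  rw [if_neg (by omega)]
  rcases eq_or_ne n 1 with h1 | h1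
  · subst h1; simp [delta]
  · rw [if_neg h1, if_neg (by omega), if_neg (by omega)]; ring

lemma u_diag (b : ℕ → ℝ) : ∀ n, sol b delta (n+1) (n+1) = 1 := by
  intro n
  induction n with
  | zero => simp [u_one]
  | succ n ih =>
      rw [sol_rec b delta n (n+2) (by omega)]
      rw [sol_zero b delta (n+1) (n+3) (by omega), sol_zero b delta (n+1) (n+2) (by omega),
        sol_zero b delta n (n+2) (by omega)]
      simpa using ih

lemma sol0 (b f : ℕ → ℝ) (m : ℕ) : sol b f 0 m = if m = 0 then f 0 else 0 := by
  rw [sol]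

lemma u_zero (b : ℕ → ℝ) (m : ℕ) (hm : m ≠ 0) : sol b delta 0 m = 0 := by
  rw [sol0, if_neg hm]

lemma sol_econtrol (b : ℕ → ℝ) (j : ℕ) : ∀ t n, n ≠ 0 →
    sol b (econtrol j) t n = if j ≤ t then sol b delta (t - j) n else 0 := by
  intro t
  induction t using Nat.twoStepInduction with
  | zero =>
      intro n hn
      rcases eq_or_ne j 0 with hj | hj
      · subst hj
        rw [sol0, if_neg hn, if_pos le_rfl, Nat.zero_sub, u_zero b n hn]
      · rw [if_neg (by omega), sol0, if_neg hn]
  | one =>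
      intro n hn
      rw [sol_one b (econtrol j) n hn, sol0, sol0, sol0,
        if_neg (by omega : ¬ n + 1 = 0), if_neg hn]
      rcases eq_or_ne n 1 with h1 | h1
      · subst h1
        rw [if_pos rfl]
        rcases Nat.lt_or_ge 1 j with hj | hj
        · rw [if_neg (by omega)]
          simp [econtrol]
          omega
        · interval_cases j
          · rw [if_pos (by omega)]
            simp [econtrol, u_one]
          · rw [if_pos le_rfl]
            simp only [Nat.sub_self]
            rw [u_zero b 1 one_ne_zero]
            simp [econtrol]
      · rw [if_neg (by omega : ¬ n - 1 = 0)]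
        rcases Nat.lt_or_ge 1 j with hj | hj
        · rw [if_neg (by omega)]; ring
        · interval_cases j
          · rw [if_pos (by omega), u_one, if_neg h1]
            simp [econtrol]
          · rw [if_pos le_rfl]
            simp only [Nat.sub_self]
            rw [u_zero b n hn]
            simp [econtrol]
  | more t ih1 ih2 =>
      intro n hn
      rw [sol_rec b (econtrol j) t n hn]
      rcases eq_or_ne n 1 with h1 | h1
      · -- n = 1 : boundary term appears
        subst h1
        rw [ih2 2 (by omega), ih2 1 (by omega), ih1 1 (by omega),
          (sol_space_zero b (econtrol j) (t+1) : sol b (econtrol j) (t+1) 0 = _)]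
        rcases Nat.lt_or_ge (t+2) j with hj | hj
        · simp only [if_neg (show ¬ j ≤ t + 1 by omega), if_neg (show ¬ j ≤ t by omega),
            if_neg (show ¬ j ≤ t + 2 by omega)]
          have : econtrol j (t+1) = 0 := by simp only [econtrol]; rw [if_neg (by omega)]
          rw [this]; ring
        rcases eq_or_ne j (t+2) with hj2 | hj2
        · subst hj2
          simp only [if_neg (show ¬ t + 2 ≤ t + 1 by omega), if_neg (show ¬ t + 2 ≤ t by omega),
            if_pos (le_refl (t+2)), Nat.sub_self]
          rw [u_zero b 1 one_ne_zero]
          have : econtrol (t+2) (t+1) = 0 := by simp only [econtrol]; rw [if_neg (by omega)]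
          rw [this]; ring
        rcases eq_or_ne j (t+1) with hj1 | hj1
        · subst hj1
          simp only [if_pos (le_refl (t+1)), if_neg (show ¬ t + 1 ≤ t by omega),
            if_pos (show t + 1 ≤ t + 2 by omega), Nat.sub_self]
          rw [u_zero b 2 (by omega), u_zero b 1 one_ne_zero,
            (show t + 2 - (t + 1) = 1 by omega), u_one]
          have : econtrol (t+1) (t+1) = 1 := by simp [econtrol]
          rw [this]; norm_num
        · have hjt : j ≤ t := by omega
          simp only [if_pos (show j ≤ t + 1 by omega), if_pos hjt,
            if_pos (show j ≤ t + 2 by omega),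
            (show t + 1 - j = (t - j) + 1 by omega), (show t + 2 - j = (t - j) + 2 by omega)]
          rw [sol_rec b delta (t-j) 1 one_ne_zero]
          have h0 : sol b delta (t - j + 1) 0 = 0 := by
            rw [sol_space_zero]; simp [delta]
          rw [h0]
          have : econtrol j (t+1) = 0 := by simp only [econtrol]; rw [if_neg (by omega)]
          rw [this]
      · -- n >= 2 : no boundary
        rw [ih2 (n+1) (by omega), ih2 (n-1) (by omega), ih2 n hn, ih1 n hn]
        rcases Nat.lt_or_ge (t+2) j with hj | hj
        · simp only [if_neg (show ¬ j ≤ t + 1 by omega), if_neg (show ¬ j ≤ t by omega),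
            if_neg (show ¬ j ≤ t + 2 by omega)]
          ring
        rcases eq_or_ne j (t+2) with hj2 | hj2
        · subst hj2
          simp only [if_neg (show ¬ t + 2 ≤ t + 1 by omega), if_neg (show ¬ t + 2 ≤ t by omega),
            if_pos (le_refl (t+2)), Nat.sub_self]
          rw [u_zero b n hn]
          ring
        rcases eq_or_ne j (t+1) with hj1 | hj1
        · subst hj1
          simp only [if_pos (le_refl (t+1)), if_neg (show ¬ t + 1 ≤ t by omega),
            if_pos (show t + 1 ≤ t + 2 by omega), Nat.sub_self]
          rw [u_zero b (n+1) (by omega), u_zero b (n-1) (by omega), u_zero b n hn,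
            (show t + 2 - (t + 1) = 1 by omega), u_one, if_neg h1]
          ring
        · have hjt : j ≤ t := by omega
          simp only [if_pos (show j ≤ t + 1 by omega), if_pos hjt,
            if_pos (show j ≤ t + 2 by omega),
            (show t + 1 - j = (t - j) + 1 by omega), (show t + 2 - j = (t - j) + 2 by omega)]
          rw [sol_rec b delta (t-j) n hn]

noncomputable def Fb (b : ℕ → ℝ) (N s t : ℕ) : ℝ :=
  ∑ n ∈ Finset.range N, sol b delta s (n+1) * sol b delta t (n+1)

noncomputable def Gd (b : ℕ → ℝ) (s t : ℕ) : ℝ :=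
  ∑ k ∈ Finset.range (min s t), resp b (s + t - 2 - 2*k)

lemma Fb_tail (b : ℕ → ℝ) (N M s t : ℕ) (hN : s ≤ N) (hM : s ≤ M) :
    Fb b N s t = Fb b M s t := by
  have key : ∀ K, s ≤ K → Fb b K s t = Fb b s s t := by
    intro K hK
    unfold Fb
    rw [← Finset.sum_subset (Finset.range_subset_range.mpr hK)]
    intro x hx hxs
    rw [sol_zero b delta s (x+1) (by simp at hxs ⊢; omega), zero_mul]
  rw [key N hN, key M hM]

lemma shift_sum (b : ℕ → ℝ) (N s t : ℕ) (hs : s ≤ N) (ht : 1 ≤ t) :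
    ∑ n ∈ Finset.range N, sol b delta s (n+2) * sol b delta t (n+1)
      = ∑ n ∈ Finset.range N, sol b delta s (n+1) * sol b delta t n := by
  have h := Finset.sum_range_succ' (fun n => sol b delta s (n+1) * sol b delta t n) N
  -- h : ∑_{n < N+1} g n = ∑_{n < N} g (n+1) + g 0
  have hgN : sol b delta s (N+1) * sol b delta t N = 0 := by
    rw [sol_zero b delta s (N+1) (by omega), zero_mul]
  have hg0 : sol b delta s (0+1) * sol b delta t 0 = 0 := by
    rw [sol_space_zero]
    simp [delta]
    omega
  rw [Finset.sum_range_succ, hgN, add_zero] at h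
  rw [hg0, add_zero] at h
  exact h.symm

lemma Fb_wave (b : ℕ → ℝ) (N s t : ℕ) (hs : 1 ≤ s) (ht : 1 ≤ t) (hsN : s ≤ N) (htN : t ≤ N) :
    Fb b N (s+1) t + Fb b N (s-1) t = Fb b N s (t+1) + Fb b N s (t-1) := by
  obtain ⟨a, rfl⟩ : ∃ a, s = a + 1 := ⟨s - 1, by omega⟩
  obtain ⟨c, rfl⟩ : ∃ c, t = c + 1 := ⟨t - 1, by omega⟩
  simp only [Nat.add_sub_cancel]
  unfold Fb
  rw [← Finset.sum_add_distrib, ← Finset.sum_add_distrib]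
  have lhs_eq : ∀ n, sol b delta (a+1+1) (n+1) * sol b delta (c+1) (n+1)
      + sol b delta a (n+1) * sol b delta (c+1) (n+1)
      = (sol b delta (a+1) (n+2) + sol b delta (a+1) n - b (n+1) * sol b delta (a+1) (n+1))
        * sol b delta (c+1) (n+1) := by
    intro n
    rw [show a+1+1 = a+2 from rfl, sol_rec b delta a (n+1) (by omega)]
    simp only [Nat.add_sub_cancel]
    ring
  have rhs_eq : ∀ n, sol b delta (a+1) (n+1) * sol b delta (c+1+1) (n+1)
      + sol b delta (a+1) (n+1) * sol b delta c (n+1)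
      = sol b delta (a+1) (n+1)
        * (sol b delta (c+1) (n+2) + sol b delta (c+1) n - b (n+1) * sol b delta (c+1) (n+1)) := by
    intro n
    rw [show c+1+1 = c+2 from rfl, sol_rec b delta c (n+1) (by omega)]
    simp only [Nat.add_sub_cancel]
    ring
  rw [Finset.sum_congr rfl (fun n _ => lhs_eq n), Finset.sum_congr rfl (fun n _ => rhs_eq n)]
  have expand1 : ∀ n, (sol b delta (a+1) (n+2) + sol b delta (a+1) n
        - b (n+1) * sol b delta (a+1) (n+1)) * sol b delta (c+1) (n+1)
      = sol b delta (a+1) (n+2) * sol b delta (c+1) (n+1)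
        + sol b delta (a+1) n * sol b delta (c+1) (n+1)
        - b (n+1) * (sol b delta (a+1) (n+1) * sol b delta (c+1) (n+1)) := by
    intro n; ring
  have expand2 : ∀ n, sol b delta (a+1) (n+1) * (sol b delta (c+1) (n+2) + sol b delta (c+1) n
        - b (n+1) * sol b delta (c+1) (n+1))
      = sol b delta (c+1) (n+2) * sol b delta (a+1) (n+1)
        + sol b delta (c+1) n * sol b delta (a+1) (n+1)
        - b (n+1) * (sol b delta (a+1) (n+1) * sol b delta (c+1) (n+1)) := by
    intro n; ring
  rw [Finset.sum_congr rfl (fun n _ => expand1 n), Finset.sum_congr rfl (fun n _ => expand2 n)]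
  rw [Finset.sum_sub_distrib, Finset.sum_sub_distrib, Finset.sum_add_distrib,
    Finset.sum_add_distrib]
  rw [shift_sum b N (a+1) (c+1) hsN (by omega)]
  rw [shift_sum b N (c+1) (a+1) htN (by omega)]
  have comm1 : ∑ n ∈ Finset.range N, sol b delta (a+1) (n+1) * sol b delta (c+1) n
      = ∑ n ∈ Finset.range N, sol b delta (c+1) n * sol b delta (a+1) (n+1) := by
    exact Finset.sum_congr rfl (fun n _ => mul_comm _ _)
  have comm2 : ∑ n ∈ Finset.range N, sol b delta (a+1) n * sol b delta (c+1) (n+1)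
      = ∑ n ∈ Finset.range N, sol b delta (c+1) (n+1) * sol b delta (a+1) n := by
    exact Finset.sum_congr rfl (fun n _ => mul_comm _ _)
  rw [comm1, comm2]
  ring

lemma Gd_diag (b : ℕ → ℝ) (s t : ℕ) : Gd b (s+1) (t+1) = resp b (s+t) + Gd b s t := by
  unfold Gd
  have hmin : min (s+1) (t+1) = min s t + 1 := by omega
  rw [hmin, Finset.sum_range_succ']
  have h0 : s + 1 + (t + 1) - 2 - 2*0 = s + t := by omega
  rw [h0, add_comm]
  congr 1
  refine Finset.sum_congr rfl (fun k hk => ?_)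
  congr 1
  omega

lemma Gd_wave (b : ℕ → ℝ) (s t : ℕ) :
    Gd b (s+2) (t+1) = Gd b (s+1) (t+2) + Gd b (s+1) t - Gd b s (t+1) := by
  have h1 := Gd_diag b (s+1) t
  have h2 := Gd_diag b s (t+1)
  rw [show s + 1 + t = s + (t+1) from by omega] at h1
  rw [h1, h2]
  ring

lemma main_id (b : ℕ → ℝ) : ∀ s t, Fb b s s t = Gd b s t := by
  intro s
  induction s using Nat.twoStepInduction with
  | zero =>
      intro t
      simp [Fb, Gd]
  | one =>
      intro t
      unfold Fb
      have : ∀ n ∈ Finset.range 1, sol b delta 1 (n+1) * sol b delta t (n+1)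
          = sol b delta t 1 := by
        intro n hn
        simp only [Finset.mem_range] at hn
        interval_cases n
        rw [u_one]
        simp
      rw [Finset.sum_congr rfl this, Finset.sum_const, Finset.card_range, one_smul]
      unfold Gd
      rcases Nat.eq_zero_or_pos t with ht | ht
      · subst ht
        rw [u_zero b 1 one_ne_zero]
        simp
      · obtain ⟨c, rfl⟩ : ∃ c, t = c + 1 := ⟨t - 1, by omega⟩
        rw [show min 1 (c+1) = 0 + 1 from by omega, Finset.sum_range_succ, Finset.range_zero,
          Finset.sum_empty, zero_add]
        rw [show 1 + (c+1) - 2 - 2*0 = c from by omega]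
        rfl
  | more a ih1 ih2 =>
      intro t
      rcases Nat.eq_zero_or_pos t with ht | ht
      · subst ht
        have hF : Fb b (a+2) (a+2) 0 = 0 := by
          unfold Fb
          refine Finset.sum_eq_zero (fun n _ => ?_)
          rw [u_zero b (n+1) (by omega), mul_zero]
        rw [hF]
        unfold Gd
        simp
      obtain ⟨c, rfl⟩ : ∃ c, t = c + 1 := ⟨t - 1, by omega⟩
      set N := a + c + 3 with hN
      have e1 : Fb b (a+2) (a+2) (c+1) = Fb b N (a+2) (c+1) :=
        Fb_tail b (a+2) N (a+2) (c+1) le_rfl (by omega)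
      have wave := Fb_wave b N (a+1) (c+1) (by omega) (by omega) (by omega) (by omega)
      simp only [Nat.add_sub_cancel] at wave
      -- wave : Fb N (a+2) (c+1) + Fb N a (c+1) = Fb N (a+1) (c+2) + Fb N (a+1) c
      have e2 : Fb b N (a+1) (c+2) = Gd b (a+1) (c+2) := by
        rw [Fb_tail b N (a+1) (a+1) (c+2) (by omega) le_rfl]; exact ih2 (c+2)
      have e3 : Fb b N (a+1) c = Gd b (a+1) c := by
        rw [Fb_tail b N (a+1) (a+1) c (by omega) le_rfl]; exact ih2 c
      have e4 : Fb b N a (c+1) = Gd b a (c+1) := by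
        rw [Fb_tail b N a a (c+1) (by omega) le_rfl]; exact ih1 (c+1)
      rw [e1, Gd_wave b a c, ← e2, ← e3, ← e4]
      linarith [wave]

lemma Wbar_eq (b : ℕ → ℝ) (T : ℕ) (n m : Fin T) :
    Wbar b T n m = sol b delta ((m : ℕ) + 1) ((n : ℕ) + 1) := by
  have hm := m.isLt
  unfold Wbar
  simp only [Matrix.of_apply]
  rw [sol_econtrol b (T - ((m:ℕ)+1)) T ((n:ℕ)+1) (by omega),
    if_pos (by omega : T - ((m:ℕ)+1) ≤ T)]
  congr 1
  omega

lemma CbarM_eq (b : ℕ → ℝ) (T : ℕ) (i j : Fin T) :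
    CbarM b T i j = Gd b ((i : ℕ) + 1) ((j : ℕ) + 1) := by
  have hi := i.isLt
  have hj := j.isLt
  unfold CbarM Cmat Gd
  simp only [Matrix.of_apply]
  have hm : T - max (T + 1 - ((j:ℕ)+1)) (T + 1 - ((i:ℕ)+1)) + 1
      = min ((i:ℕ)+1) ((j:ℕ)+1) := by omega
  rw [hm, ← Finset.sum_range_reflect]
  refine Finset.sum_congr rfl fun k hk => ?_
  simp only [Finset.mem_range] at hk
  congr 1
  omega

lemma Wbar_tri (b : ℕ → ℝ) (T : ℕ) (n m : Fin T) (h : (m : ℕ) < (n : ℕ)) :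
    Wbar b T n m = 0 := by
  rw [Wbar_eq]
  exact sol_zero b delta ((m:ℕ)+1) ((n:ℕ)+1) (by omega)

lemma Wbar_diag (b : ℕ → ℝ) (T : ℕ) (n : Fin T) : Wbar b T n n = 1 := by
  rw [Wbar_eq]
  exact u_diag b (n : ℕ)

lemma Wbar_det (b : ℕ → ℝ) (T : ℕ) : (Wbar b T).det = 1 := by
  rw [Matrix.det_of_upperTriangular (M := Wbar b T)
    (fun i j hij => Wbar_tri b T i j hij)]
  simp [Wbar_diag]

lemma CbarM_factor (b : ℕ → ℝ) (T : ℕ) (i j : Fin T) :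
    CbarM b T i j = ∑ n : Fin T, Wbar b T n i * Wbar b T n j := by
  rw [CbarM_eq]
  have : ∀ n : Fin T, Wbar b T n i * Wbar b T n j
      = sol b delta ((i:ℕ)+1) ((n:ℕ)+1) * sol b delta ((j:ℕ)+1) ((n:ℕ)+1) := by
    intro n; rw [Wbar_eq, Wbar_eq]
  rw [Finset.sum_congr rfl (fun n _ => this n)]
  rw [Fin.sum_univ_eq_sum_range (fun n => sol b delta ((i:ℕ)+1) (n+1) * sol b delta ((j:ℕ)+1) (n+1)) T]
  have : (∑ n ∈ Finset.range T, sol b delta ((i:ℕ)+1) (n+1) * sol b delta ((j:ℕ)+1) (n+1))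
      = Fb b T ((i:ℕ)+1) ((j:ℕ)+1) := rfl
  rw [this, Fb_tail b T ((i:ℕ)+1) ((i:ℕ)+1) ((j:ℕ)+1) i.isLt le_rfl, main_id]

theorem gelfand_levitan' (b : ℕ → ℝ) (T : ℕ) (hT : 2 ≤ T) :
    (∀ n m : Fin T, (m : ℕ) < (n : ℕ) → Wbar b T n m = 0) ∧
    (∀ n : Fin T, Wbar b T n n = 1) ∧
    IsUnit (Wbar b T).det ∧
    (∀ β : Fin T, (β : ℕ) + 1 < T →
      (Wbar b T)⁻¹ β ⟨T - 1, Nat.sub_lt (by omega) Nat.one_pos⟩ +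
        (∑ j : Fin T, if (j : ℕ) + 1 < T then
          (CbarM b T - 1) β j * (Wbar b T)⁻¹ j ⟨T - 1, Nat.sub_lt (by omega) Nat.one_pos⟩ else 0) +
        (CbarM b T - 1) β ⟨T - 1, Nat.sub_lt (by omega) Nat.one_pos⟩ = 0) := by
  refine ⟨Wbar_tri b T, Wbar_diag b T, by rw [Wbar_det]; exact isUnit_one, ?_⟩
  intro β hβ
  set A := Wbar b T with hA
  set B := A⁻¹ with hB
  have hdet : IsUnit A.det := by rw [hA, Wbar_det]; exact isUnit_one
  have hABone : A * B = 1 := Matrix.mul_nonsing_inv A hdet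
  set e : Fin T := ⟨T - 1, by omega⟩ with he
  have heval : (e : ℕ) = T - 1 := rfl
  have hβe : β ≠ e := by
    intro h
    have h2 : (β : ℕ) = (e : ℕ) := congrArg Fin.val h
    rw [heval] at h2
    omega
  have hBee : B e e = 1 := by
    have h1 := congrArg (fun M => M e e) hABone
    simp only [Matrix.mul_apply, Matrix.one_apply_eq] at h1
    rw [Finset.sum_eq_single e] at h1
    · rwa [hA, Wbar_diag, one_mul] at h1
    · intro k _ hk
      have hk2 : (k : ℕ) < (e : ℕ) := by
        have h3 := k.isLt
        have h4 : (k : ℕ) ≠ (e : ℕ) := fun h => hk (Fin.ext h)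
        rw [heval] at h4 ⊢
        omega
      rw [hA, Wbar_tri b T e k hk2, zero_mul]
    · intro h; exact absurd (Finset.mem_univ e) h
  have hkey : ∑ j : Fin T, CbarM b T β j * B j e = 0 := by
    have hC : ∀ j, CbarM b T β j = (A.transpose * A) β j := by
      intro j
      rw [CbarM_factor, Matrix.mul_apply]
      exact Finset.sum_congr rfl fun n _ => by rw [Matrix.transpose_apply, hA]
    calc ∑ j : Fin T, CbarM b T β j * B j e
        = ∑ j : Fin T, (A.transpose * A) β j * B j e :=
          Finset.sum_congr rfl fun j _ => by rw [hC]
      _ = ((A.transpose * A) * B) β e := (Matrix.mul_apply).symm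
      _ = (A.transpose * (A * B)) β e := by rw [Matrix.mul_assoc]
      _ = A.transpose β e := by rw [hABone, Matrix.mul_one]
      _ = A e β := Matrix.transpose_apply _ _ _
      _ = 0 := by
          refine Wbar_tri b T e β ?_
          rw [heval]
          omega
  set f : Fin T → ℝ := fun j => (CbarM b T - 1) β j * B j e with hf
  have hcond : ∀ j : Fin T, (if (j : ℕ) + 1 < T then f j else 0)
      = f j - (if j = e then f j else 0) := by
    intro j
    have hj := j.isLt
    rcases eq_or_ne j e with hje | hje
    · rw [if_pos hje, if_neg (by rw [hje, heval]; omega)]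
      ring
    · have : (j : ℕ) + 1 < T := by
        have : (j : ℕ) ≠ T - 1 := fun h => hje (Fin.ext (by simp [he, h]))
        omega
      rw [if_pos this, if_neg hje]
      ring
  have hsum1 : ∑ j : Fin T, (if j = e then f j else 0) = f e := by
    rw [Finset.sum_ite_eq' Finset.univ e f, if_pos (Finset.mem_univ e)]
  have hsum2 : ∑ j : Fin T, f j = -(B β e) := by
    have expand : ∀ j : Fin T, f j = CbarM b T β j * B j e
        - (if β = j then 1 else 0) * B j e := by
      intro j
      rw [hf]
      simp only [Matrix.sub_apply, Matrix.one_apply]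
      ring
    rw [Finset.sum_congr rfl fun j _ => expand j, Finset.sum_sub_distrib, hkey]
    have : ∑ j : Fin T, (if β = j then 1 else 0) * B j e = B β e := by
      have : ∀ j : Fin T, (if β = j then (1:ℝ) else 0) * B j e
          = (if β = j then B j e else 0) := by
        intro j; split_ifs <;> ring
      rw [Finset.sum_congr rfl fun j _ => this j,
        Finset.sum_ite_eq Finset.univ β (fun j => B j e), if_pos (Finset.mem_univ β)]
    rw [this]
    ring
  have hfe : f e = CbarM b T β e := by
    rw [hf]
    simp only [Matrix.sub_apply, Matrix.one_apply_ne hβe, hBee]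
    ring
  have hCe : (CbarM b T - 1) β e = CbarM b T β e := by
    simp only [Matrix.sub_apply, Matrix.one_apply_ne hβe]
    ring
  calc B β e + (∑ j : Fin T, if (j : ℕ) + 1 < T then f j else 0) + (CbarM b T - 1) β e
      = B β e + (∑ j : Fin T, (f j - if j = e then f j else 0)) + (CbarM b T - 1) β e := by
        rw [Finset.sum_congr rfl fun j _ => hcond j]
    _ = B β e + ((∑ j : Fin T, f j) - f e) + (CbarM b T - 1) β e := by
        rw [Finset.sum_sub_distrib, hsum1]
    _ = B β e + (-(B β e) - CbarM b T β e) + CbarM b T β e := by rw [hsum2, hfe, hCe]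
    _ = 0 := by ring

/-- Gelfand–Levitan equation: `W̄` is upper triangular with unit diagonal, hence invertible,
and the last column of `W̄⁻¹` satisfies the Gelfand–Levitan equation with kernel `C̄ - I`. -/
theorem gelfand_levitan (b : ℕ → ℝ) (T : ℕ) (hT : 2 ≤ T) :
    (∀ n m : Fin T, (m : ℕ) < (n : ℕ) → Wbar b T n m = 0) ∧
    (∀ n : Fin T, Wbar b T n n = 1) ∧
    IsUnit (Wbar b T).det ∧
    (∀ β : Fin T, (β : ℕ) + 1 < T →
      (Wbar b T)⁻¹ β ⟨T - 1, by omega⟩ +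
        (∑ j : Fin T, if (j : ℕ) + 1 < T then
          (CbarM b T - 1) β j * (Wbar b T)⁻¹ j ⟨T - 1, by omega⟩ else 0) +
        (CbarM b T - 1) β ⟨T - 1, by omega⟩ = 0) := by
  exact gelfand_levitan' b T hT
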